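/- Let s ≥ 1, m ≥ 2^s and t ≥ s be integers and embed S = {1,…,2^s}^s into [m]^t by padding the last t−s coordinates with 1. Under Mubayi's coloring c of the complete graph on [m]^t, the unordered pairs of distinct elements of the image of S (a set of 2^{s²} elements) receive at most (2^s choose 2)·2^s < 2^{3s} distinct colors. In particular, with p = 2^{s²}, the coloring c is not a (p, 2^{3s})-coloring of the complete graph on [m]^t. -/

import Mathlib

/-- Mubayi's coloring of the complete graph on `[m]^t`: for distinct `v, w` the color is
`({v_i, w_i}, a_1, …, a_t)`, where `i` is the least coordinate with `v i ≠ w i` and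
`a_j` records whether `v j = w j` or not. (For `v = w` the first component is `none`.) -/
def mubayiColor {m t : ℕ} (v w : Fin t → Fin m) : Option (Sym2 (Fin m)) × (Fin t → Bool) :=
  (((List.finRange t).find? (fun i => v i != w i)).map (fun i => s(v i, w i)),
   fun j => v j != w j)

lemma castLE_bne' {n m : ℕ} (h : n ≤ m) (a b : Fin n) :
    (Fin.castLE h a != Fin.castLE h b) = (a != b) := by
  simp [bne, Fin.ext_iff]


/-- For `s ≥ 1`, `m ≥ 2^s`, `t ≥ s`, embed `S = [2^s]^s` into `[m]^t` by padding the
last `t − s` coordinates with a fixed value. The image `T` has `2^{s²}` elements, but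
its unordered pairs of distinct elements receive at most `C(2^s, 2)·2^s < 2^{3s}`
distinct colors under Mubayi's coloring; in particular, with `p = 2^{s²}`, Mubayi's
coloring is not a `(p, 2^{3s})`-coloring. -/
theorem stmt16 (s m t : ℕ) (hs : 1 ≤ s) (hm : 2 ^ s ≤ m) (ht : s ≤ t) :
    ∀ em : (Fin s → Fin (2 ^ s)) → (Fin t → Fin m),
      (∀ x (j : Fin t), em x j =
        if h : (j : ℕ) < s then Fin.castLE hm (x ⟨(j : ℕ), h⟩)
        else ⟨0, Nat.lt_of_lt_of_le (Nat.pow_pos (by norm_num)) hm⟩) →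
      ∀ T : Finset (Fin t → Fin m), T = Finset.univ.image em →
        T.card = 2 ^ (s ^ 2) ∧
        (((T ×ˢ T).filter fun e => e.1 ≠ e.2).image fun e => mubayiColor e.1 e.2).card ≤
          Nat.choose (2 ^ s) 2 * 2 ^ s ∧
        Nat.choose (2 ^ s) 2 * 2 ^ s < 2 ^ (3 * s) ∧
        ¬ (∀ S : Finset (Fin t → Fin m), S.card = 2 ^ (s ^ 2) →
            2 ^ (3 * s) ≤ (((S ×ˢ S).filter fun e => e.1 ≠ e.2).image
              fun e => mubayiColor e.1 e.2).card) := by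
  intro em hem T hT
  classical
  have hinj : Function.Injective em := by
    intro x y h
    funext j
    have hj : (j : ℕ) < t := lt_of_lt_of_le j.2 ht
    have h2 := congrFun h ⟨j, hj⟩
    rw [hem, hem] at h2
    simp only [dif_pos (show ((⟨(j : ℕ), hj⟩ : Fin t) : ℕ) < s from j.2)] at h2
    have := Fin.castLE_injective hm h2
    simpa using this
  have hcard : T.card = 2 ^ (s ^ 2) := by
    rw [hT, Finset.card_image_of_injective _ hinj, Finset.card_univ]
    simp only [Fintype.card_fun, Fintype.card_fin]
    rw [← pow_mul, sq]
  have hbound : (((T ×ˢ T).filter fun e => e.1 ≠ e.2).image fun e => mubayiColor e.1 e.2).card ≤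
      Nat.choose (2 ^ s) 2 * 2 ^ s := by
    set f : Sym2 (Fin (2 ^ s)) × (Fin s → Bool) → Option (Sym2 (Fin m)) × (Fin t → Bool) :=
      fun pa => (some (pa.1.map (Fin.castLE hm)),
        fun j => if h : (j : ℕ) < s then pa.2 ⟨(j : ℕ), h⟩ else false) with hf
    have hsub : (((T ×ˢ T).filter fun e => e.1 ≠ e.2).image fun e => mubayiColor e.1 e.2)
        ⊆ ((Finset.univ.filter fun z : Sym2 (Fin (2 ^ s)) => ¬ z.IsDiag) ×ˢ
            (Finset.univ : Finset (Fin s → Bool))).image f := by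
      intro c hc
      simp only [Finset.mem_image, Finset.mem_filter, Finset.mem_product] at hc
      obtain ⟨⟨v, w⟩, ⟨⟨hv, hw⟩, hvw⟩, rfl⟩ := hc
      rw [hT, Finset.mem_image] at hv hw
      obtain ⟨x, -, rfl⟩ := hv
      obtain ⟨y, -, rfl⟩ := hw
      have hne : ∃ i ∈ List.finRange t, (em x i != em y i) = true := by
        by_contra hcon
        push_neg at hcon
        apply hvw
        have : em x = em y := by
          funext i
          have := hcon i (List.mem_finRange i)
          simpa [bne] using this
        simpa using this
      have hsome : ((List.finRange t).find? (fun i => em x i != em y i)).isSome = true :=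
        List.find?_isSome.mpr hne
      obtain ⟨i, hi⟩ := Option.isSome_iff_exists.mp hsome
      have hpi : em x i ≠ em y i := by
        have := List.find?_some hi
        simpa [bne] using this
      have his : (i : ℕ) < s := by
        by_contra hcon
        apply hpi
        rw [hem, hem, dif_neg hcon, dif_neg hcon]
      have hxy : x ⟨(i : ℕ), his⟩ ≠ y ⟨(i : ℕ), his⟩ := by
        intro he
        apply hpi
        rw [hem, hem, dif_pos his, dif_pos his, he]
      rw [Finset.mem_image]
      refine ⟨(s(x ⟨(i : ℕ), his⟩, y ⟨(i : ℕ), his⟩), fun j => x j != y j), ?_, ?_⟩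
      · simp [Sym2.mk_isDiag_iff, hxy]
      · unfold mubayiColor
        rw [hf]
        refine Prod.ext ?_ ?_
        · simp only [hi, Option.map_some, Sym2.map_pair_eq]
          rw [hem, hem, dif_pos his, dif_pos his]
        · funext j
          by_cases hjs : (j : ℕ) < s
          · simp only [dif_pos hjs]
            rw [hem, hem, dif_pos hjs, dif_pos hjs, castLE_bne']
          · simp only [dif_neg hjs]
            rw [hem, hem, dif_neg hjs, dif_neg hjs]
            simp
    calc (((T ×ˢ T).filter fun e => e.1 ≠ e.2).image fun e => mubayiColor e.1 e.2).card
        ≤ (((Finset.univ.filter fun z : Sym2 (Fin (2 ^ s)) => ¬ z.IsDiag) ×ˢ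
            (Finset.univ : Finset (Fin s → Bool))).image f).card := Finset.card_le_card hsub
      _ ≤ ((Finset.univ.filter fun z : Sym2 (Fin (2 ^ s)) => ¬ z.IsDiag) ×ˢ
            (Finset.univ : Finset (Fin s → Bool))).card := Finset.card_image_le
      _ = Nat.choose (2 ^ s) 2 * 2 ^ s := by
          rw [Finset.card_product, Finset.card_univ]
          congr 1
          · rw [← Fintype.card_subtype]
            simpa using Sym2.card_subtype_not_diag (α := Fin (2 ^ s))
          · simp
  have hlt : Nat.choose (2 ^ s) 2 * 2 ^ s < 2 ^ (3 * s) := by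
    have hn : 2 ≤ 2 ^ s := by
      calc 2 = 2 ^ 1 := (pow_one 2).symm
        _ ≤ 2 ^ s := Nat.pow_le_pow_right (by norm_num) hs
    have h1 : Nat.choose (2 ^ s) 2 < (2 ^ s) ^ 2 := by
      rw [Nat.choose_two_right, sq]
      calc 2 ^ s * (2 ^ s - 1) / 2 ≤ 2 ^ s * (2 ^ s - 1) := Nat.div_le_self _ _
        _ < 2 ^ s * 2 ^ s := mul_lt_mul_of_pos_left (by omega) (by positivity)
    calc Nat.choose (2 ^ s) 2 * 2 ^ s < (2 ^ s) ^ 2 * 2 ^ s :=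
          mul_lt_mul_of_pos_right h1 (by positivity)
      _ = 2 ^ (3 * s) := by
          rw [← pow_mul, ← pow_add]
          ring_nf
  refine ⟨hcard, hbound, hlt, ?_⟩
  intro hall
  have h2 := hall T hcard
  omega
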